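/- For all natural numbers n and k with 2 ≤ k ≤ n, the recurrence D(n,k) = (k−1)·D(n−1,k) + k·D(n−1,k−1) holds. -/

import Mathlib

namespace PaperStmt

/-- `w : Fin n → V` is a walk of length `n - 1` in the simple graph `G`:
a sequence of `n` vertices in which consecutive vertices are adjacent. -/
def IsWalk {V : Type*} (G : SimpleGraph V) {n : ℕ} (w : Fin n → V) : Prop :=
  ∀ (i : ℕ) (h : i + 1 < n), G.Adj (w ⟨i, Nat.lt_of_succ_lt h⟩) (w ⟨i + 1, h⟩)

/-- `Y n G` is the number of walks of length `n - 1` in `G` that visit every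
vertex of `G` at least once. -/
noncomputable def Y {V : Type*} [Fintype V] (n : ℕ) (G : SimpleGraph V) : ℕ :=
  Nat.card {w : Fin n → V // IsWalk G w ∧ Function.Surjective w}

/-- `D n k = Y n K_k`, where `K_k` is the complete graph on `k` vertices. -/
noncomputable def D (n k : ℕ) : ℕ :=
  Y n (⊤ : SimpleGraph (Fin k))

open Function

/-- A walk in the complete graph has distinct consecutive vertices. -/
lemma walk_ne {V : Type*} {n : ℕ} {w : Fin n → V} (h : IsWalk (⊤ : SimpleGraph V) w)
    (i : ℕ) (hi : i + 1 < n) : w ⟨i, Nat.lt_of_succ_lt hi⟩ ≠ w ⟨i + 1, hi⟩ :=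
  (h i hi).ne

lemma isWalk_top_of_ne {V : Type*} {n : ℕ} {w : Fin n → V}
    (h : ∀ (i : ℕ) (hi : i + 1 < n), w ⟨i, Nat.lt_of_succ_lt hi⟩ ≠ w ⟨i + 1, hi⟩) :
    IsWalk (⊤ : SimpleGraph V) w := fun i hi => (SimpleGraph.top_adj _ _).mpr (h i hi)

/-- `Y n ⊤` only depends on the cardinality of the vertex type. -/
lemma Y_top_congr {V V' : Type*} [Fintype V] [Fintype V'] (e : V ≃ V') (n : ℕ) :
    Y n (⊤ : SimpleGraph V) = Y n (⊤ : SimpleGraph V') := by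
  apply Nat.card_congr
  refine ⟨fun w => ⟨e ∘ w.1, ?_, ?_⟩, fun w => ⟨e.symm ∘ w.1, ?_, ?_⟩, ?_, ?_⟩
  · exact isWalk_top_of_ne fun i hi => fun hc => (walk_ne w.2.1 i hi) (e.injective hc)
  · exact e.surjective.comp w.2.2
  · exact isWalk_top_of_ne fun i hi => fun hc => (walk_ne w.2.1 i hi) (e.symm.injective hc)
  · exact e.symm.surjective.comp w.2.2
  · intro w; apply Subtype.ext; funext i; simp
  · intro w; apply Subtype.ext; funext i; simp

/-- If `w` is surjective but its prefix is not, then the prefix avoids the last value. -/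
lemma prefix_avoids {m k : ℕ} {w : Fin (m + 1) → Fin k} (hs : Surjective w)
    (hns : ¬ Surjective (fun i : Fin m => w i.castSucc)) (i : Fin m) :
    w i.castSucc ≠ w (Fin.last m) := by
  intro hi
  apply hns
  intro y
  obtain ⟨j, hj⟩ := hs y
  by_cases hjl : j = Fin.last m
  · exact ⟨i, show w i.castSucc = y by rw [hi, ← hjl, hj]⟩
  · obtain ⟨j', rfl⟩ := Fin.exists_castSucc_eq.mpr hjl
    exact ⟨j', hj⟩

section Equivs

variable {m k : ℕ}

/-- Walks whose prefix is surjective correspond to (surjective walk, new last vertex). -/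
noncomputable def equivA1 (hm : 0 < m) :
    {w : Fin (m + 1) → Fin k // IsWalk ⊤ w ∧ Surjective w ∧
        Surjective (fun i : Fin m => w i.castSucc)} ≃
    {p : {u : Fin m → Fin k // IsWalk ⊤ u ∧ Surjective u} × Fin k //
        p.2 ≠ p.1.1 ⟨m - 1, by omega⟩} where
  toFun w := ⟨⟨⟨fun i => w.1 i.castSucc, by
      intro i hi
      exact w.2.1 i (by omega), w.2.2.2⟩, w.1 (Fin.last m)⟩, by
      have h := walk_ne w.2.1 (m - 1) (by omega)
      have e1 : (⟨m - 1 + 1, by omega⟩ : Fin (m + 1)) = Fin.last m := by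
        ext; simp; omega
      rw [e1] at h
      exact fun hc => h (by simpa using hc.symm)⟩
  invFun p := ⟨Fin.snoc p.1.1.1 p.1.2, by
      intro i hi
      rcases Nat.lt_or_ge (i + 1) m with h | h
      · have e1 : (⟨i, by omega⟩ : Fin (m + 1)) = Fin.castSucc ⟨i, by omega⟩ := rfl
        have e2 : (⟨i + 1, hi⟩ : Fin (m + 1)) = Fin.castSucc ⟨i + 1, h⟩ := rfl
        rw [e1, e2, Fin.snoc_castSucc, Fin.snoc_castSucc]
        exact p.1.1.2.1 i h
      · have him : i + 1 = m := by omega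
        have e1 : (⟨i, by omega⟩ : Fin (m + 1)) = Fin.castSucc ⟨i, by omega⟩ := rfl
        have e2 : (⟨i + 1, hi⟩ : Fin (m + 1)) = Fin.last m := by ext; simpa using him
        rw [e1, e2, Fin.snoc_castSucc, Fin.snoc_last]
        refine (SimpleGraph.top_adj _ _).mpr fun hc => p.2 ?_
        have e3 : (⟨i, by omega⟩ : Fin m) = ⟨m - 1, by omega⟩ :=
          Fin.ext (show i = m - 1 by omega)
        rw [← hc, e3], by
      constructor
      · intro y
        obtain ⟨j, hj⟩ := p.1.1.2.2 y
        exact ⟨j.castSucc, by rw [Fin.snoc_castSucc]; exact hj⟩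
      · have hpre : (fun i : Fin m => (Fin.snoc p.1.1.1 p.1.2 : Fin (m + 1) → Fin k) i.castSucc) = p.1.1.1 := by
          funext i; simp
        rw [hpre]
        exact p.1.1.2.2⟩
  left_inv w := by
    apply Subtype.ext
    funext i
    induction i using Fin.lastCases with
    | last => simp
    | cast i => simp
  right_inv p := by
    apply Subtype.ext
    rw [Prod.ext_iff]
    refine ⟨Subtype.ext ?_, by simp⟩
    funext i
    simp

/-- Remove the dependence of the "forbidden value" on the first component. -/
def equivSub [NeZero k] {X : Type*} (f : X → Fin k) :
    {p : X × Fin k // p.2 ≠ f p.1} ≃ X × {a : Fin k // a ≠ 0} where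
  toFun p := ⟨p.1.1, ⟨p.1.2 - f p.1.1, sub_ne_zero.mpr p.2⟩⟩
  invFun q := ⟨⟨q.1, q.2.1 + f q.1⟩, fun hc => q.2.2 (add_eq_right.mp hc)⟩
  left_inv p := by apply Subtype.ext; exact Prod.ext rfl (by simp)
  right_inv q := by refine Prod.ext rfl (Subtype.ext ?_); simp

/-- Walks whose prefix is not surjective correspond to (missing vertex, surjective walk
on the remaining vertices, normalized so the missing vertex is `0`). -/
noncomputable def equivA2 [NeZero k] :
    {w : Fin (m + 1) → Fin k // IsWalk ⊤ w ∧ Surjective w ∧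
        ¬ Surjective (fun i : Fin m => w i.castSucc)} ≃
    Fin k × {u : Fin m → {x : Fin k // x ≠ 0} // IsWalk ⊤ u ∧ Surjective u} where
  toFun w := ⟨w.1 (Fin.last m),
    ⟨fun i => ⟨w.1 i.castSucc - w.1 (Fin.last m),
      sub_ne_zero.mpr (prefix_avoids w.2.2.1 w.2.2.2 i)⟩, by
      refine isWalk_top_of_ne fun i hi hc => ?_
      have hc' : w.1 (Fin.castSucc ⟨i, by omega⟩) = w.1 (Fin.castSucc ⟨i + 1, hi⟩) := by
        have h2 := congrArg Subtype.val hc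
        simp only [sub_left_inj] at h2
        exact h2
      exact walk_ne w.2.1 i (by omega) hc', by
      rintro ⟨y, hy⟩
      obtain ⟨j, hj⟩ := w.2.2.1 (y + w.1 (Fin.last m))
      have hjl : j ≠ Fin.last m := by
        intro hc; rw [hc] at hj
        exact hy (add_eq_right.mp hj.symm)
      obtain ⟨j', hj'⟩ := Fin.exists_castSucc_eq.mpr hjl
      exact ⟨j', Subtype.ext (show w.1 j'.castSucc - w.1 (Fin.last m) = y by rw [hj', hj]; simp)⟩⟩⟩
  invFun p := ⟨Fin.snoc (fun i => (p.2.1 i).1 + p.1) p.1, by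
      intro i hi
      rcases Nat.lt_or_ge (i + 1) m with h | h
      · have e1 : (⟨i, by omega⟩ : Fin (m + 1)) = Fin.castSucc ⟨i, by omega⟩ := rfl
        have e2 : (⟨i + 1, hi⟩ : Fin (m + 1)) = Fin.castSucc ⟨i + 1, h⟩ := rfl
        rw [e1, e2, Fin.snoc_castSucc, Fin.snoc_castSucc]
        refine (SimpleGraph.top_adj _ _).mpr fun hc => ?_
        exact walk_ne p.2.2.1 i h (Subtype.ext (by simpa using hc))
      · have him : i + 1 = m := by omega
        have e1 : (⟨i, by omega⟩ : Fin (m + 1)) = Fin.castSucc ⟨i, by omega⟩ := rfl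
        have e2 : (⟨i + 1, hi⟩ : Fin (m + 1)) = Fin.last m := by ext; simpa using him
        rw [e1, e2, Fin.snoc_castSucc, Fin.snoc_last]
        refine (SimpleGraph.top_adj _ _).mpr fun hc => ?_
        exact (p.2.1 ⟨i, by omega⟩).2 (by simpa using hc), by
      constructor
      · intro y
        by_cases hy : y = p.1
        · exact ⟨Fin.last m, by rw [Fin.snoc_last, hy]⟩
        · obtain ⟨j, hj⟩ := p.2.2.2 ⟨y - p.1, sub_ne_zero.mpr hy⟩
          refine ⟨j.castSucc, ?_⟩
          rw [Fin.snoc_castSucc, hj]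
          simp
      · intro hc
        obtain ⟨i, hi⟩ := hc p.1
        simp only [Fin.snoc_castSucc] at hi
        exact (p.2.1 i).2 (by simpa using hi)⟩
  left_inv w := by
    apply Subtype.ext
    funext i
    induction i using Fin.lastCases with
    | last => simp
    | cast i => simp
  right_inv p := by
    refine Prod.ext (by simp) (Subtype.ext ?_)
    funext i
    apply Subtype.ext
    simp

end Equivs

lemma card_split {α : Type*} [Finite α] (P Q : α → Prop) :
    Nat.card {a : α // P a} = Nat.card {a // P a ∧ Q a} + Nat.card {a // P a ∧ ¬ Q a} := by
  classical
  rw [← Nat.card_sum]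
  apply Nat.card_congr
  exact ((Equiv.sumCompl fun x : {a // P a} => Q x.1).symm.trans
    (Equiv.sumCongr (Equiv.subtypeSubtypeEquivSubtypeInter P Q)
      (Equiv.subtypeSubtypeEquivSubtypeInter P fun a => ¬ Q a)))

lemma card_ne_zero {k : ℕ} [NeZero k] : Nat.card {a : Fin k // a ≠ 0} = k - 1 := by
  rw [Nat.card_eq_fintype_card, Fintype.card_subtype_compl, Fintype.card_subtype_eq]
  simp

theorem D_recurrence (n k : ℕ) (hk : 2 ≤ k) (hkn : k ≤ n) :
    D n k = (k - 1) * D (n - 1) k + k * D (n - 1) (k - 1) := by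
  classical
  obtain ⟨m, rfl⟩ : ∃ m, n = m + 1 := ⟨n - 1, by omega⟩
  have hm : 0 < m := by omega
  have hk0 : NeZero k := ⟨by omega⟩
  have hsplit := card_split (α := Fin (m + 1) → Fin k)
    (fun w => IsWalk ⊤ w ∧ Function.Surjective w)
    (fun w => Function.Surjective (fun i : Fin m => w i.castSucc))
  have e1 : Nat.card {w : Fin (m + 1) → Fin k //
      (IsWalk ⊤ w ∧ Function.Surjective w) ∧
        Function.Surjective (fun i : Fin m => w i.castSucc)} = D m k * (k - 1) := by
    have hmm : m - 1 < m := Nat.sub_lt hm Nat.one_pos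
    rw [Nat.card_congr ((Equiv.subtypeEquivRight fun w => and_assoc).trans
      ((equivA1 hm).trans (equivSub fun u : {u : Fin m → Fin k //
        IsWalk ⊤ u ∧ Function.Surjective u} => u.1 ⟨m - 1, hmm⟩))),
      Nat.card_prod, card_ne_zero]
    rfl
  have e2 : Nat.card {w : Fin (m + 1) → Fin k //
      (IsWalk ⊤ w ∧ Function.Surjective w) ∧
        ¬ Function.Surjective (fun i : Fin m => w i.castSucc)} = k * D m (k - 1) := by
    rw [Nat.card_congr ((Equiv.subtypeEquivRight fun w => and_assoc).trans equivA2),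
      Nat.card_prod, Nat.card_eq_fintype_card, Fintype.card_fin]
    congr 1
    have := Y_top_congr (V := {x : Fin k // x ≠ 0})
      (Fintype.equivFinOfCardEq (by
        rw [← Nat.card_eq_fintype_card, card_ne_zero])) m
    exact this
  show Y (m + 1) (⊤ : SimpleGraph (Fin k)) = _
  rw [Y, hsplit, e1, e2]
  simp only [Nat.add_sub_cancel]
  ring

end PaperStmt
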